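/- Let F be a field, A an n×n matrix over F, p and t_0 natural numbers, λ_1,…,λ_p pairwise distinct nonzero elements of F, and t_1,…,t_p ≥ 1 natural numbers. Suppose there are n×n matrices N_0,…,N_{t_0−1} and M_{j,i} (1 ≤ j ≤ p, 0 ≤ i < t_j) over F such that for every natural number k: A^k = (N_k if k < t_0, and 0 otherwise) + ∑_{j=1}^{p} λ_j^k · ∑_{i=0}^{t_j−1} C(k,i)·M_{j,i}; suppose moreover that M_{j, t_j−1} ≠ 0 for every j, and that N_{t_0−1} ≠ 0 whenever t_0 ≥ 1. Then the minimal polynomial of A over F equals X^{t_0} · ∏_{j=1}^{p} (X − λ_j)^{t_j}. -/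

import Mathlib

open Finset Polynomial

lemma aux_taylor_factor {F : Type*} [Field F] (r : F) (s : ℕ) (g : F[X]) :
    Polynomial.taylor r ((X - C r) ^ s * g) = X ^ s * Polynomial.taylor r g := by
  simp [taylor_apply, mul_comp, pow_comp, sub_comp]

lemma aux_taylor_coeff_zero {F : Type*} [Field F] (r : F) {t i : ℕ} {f : F[X]}
    (h : (X - C r) ^ t ∣ f) (hi : i < t) : (Polynomial.taylor r f).coeff i = 0 := by
  obtain ⟨g, rfl⟩ := h
  rw [aux_taylor_factor]
  exact (X_pow_dvd_iff.mp (Dvd.intro _ rfl)) i hi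

lemma aux_taylor_coeff_top {F : Type*} [Field F] (r : F) (s : ℕ) (g : F[X]) :
    (Polynomial.taylor r ((X - C r) ^ s * g)).coeff s = g.eval r := by
  rw [aux_taylor_factor]
  simpa using coeff_X_pow_mul (Polynomial.taylor r g) s 0

lemma aux_key
    (F : Type*) [Field F] (n : Type*) [Fintype n] [DecidableEq n]
    (A : Matrix n n F) (p t₀ : ℕ) (lam : Fin p → F) (t : Fin p → ℕ)
    (N : ℕ → Matrix n n F) (M : Fin p → ℕ → Matrix n n F)
    (hpow : ∀ k : ℕ,
      A ^ k = (if k < t₀ then N k else 0) +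
        ∑ j : Fin p, lam j ^ k •
          ∑ i ∈ Finset.range (t j), (k.choose i : F) • M j i)
    (f : F[X]) :
    (aeval A) f = (∑ k ∈ Finset.range t₀, f.coeff k • N k) +
      ∑ j : Fin p, ∑ i ∈ Finset.range (t j),
        (lam j ^ i * (Polynomial.taylor (lam j) f).coeff i) • M j i := by
  induction f using Polynomial.induction_on' with
  | add f g hf hg =>
      rw [map_add, hf, hg]
      simp only [coeff_add, map_add, mul_add, add_smul, Finset.sum_add_distrib]
      abel
  | monomial k a =>
      have h2 : ∀ (j : Fin p) (i : ℕ),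
          lam j ^ i * ((Polynomial.taylor (lam j)) ((monomial k) a)).coeff i
            = a * (lam j ^ k * (k.choose i : F)) := by
        intro j i
        rw [taylor_monomial, coeff_C_mul, coeff_X_add_C_pow]
        rcases le_or_gt i k with h | h
        · rw [show lam j ^ i * (a * (lam j ^ (k - i) * (k.choose i : F)))
              = a * (lam j ^ i * lam j ^ (k - i) * (k.choose i : F)) by ring,
            ← pow_add, Nat.add_sub_cancel' h]
        · rw [Nat.choose_eq_zero_of_lt h]
          push_cast
          ring
      rw [Polynomial.aeval_monomial, ← Algebra.smul_def, hpow k, smul_add]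
      congr 1
      · rw [show (a • if k < t₀ then N k else 0) = (if k < t₀ then a • N k else 0) by
            split <;> simp]
        rw [eq_comm]
        simp only [coeff_monomial, ite_smul, zero_smul]
        rw [Finset.sum_ite_eq]
        simp
      · rw [Finset.smul_sum]
        refine Finset.sum_congr rfl fun j _ => ?_
        rw [Finset.smul_sum, Finset.smul_sum]
        refine Finset.sum_congr rfl fun i _ => ?_
        rw [h2 j i, smul_smul, smul_smul, mul_assoc]

lemma aux_dvd_of_count_lt {F : Type*} [Field F] [DecidableEq F] {m q f : F[X]} {r : F}
    (hm0 : m ≠ 0) (hmsp : m.Splits) (hq0 : q ≠ 0) (hmq : m ∣ q)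
    (hcount : m.roots.count r < q.roots.count r) (hf : q = f * (X - C r)) : m ∣ f := by
  have hroots : q.roots = f.roots + {r} := by
    rw [hf, roots_mul (by rw [← hf]; exact hq0), roots_X_sub_C]
  apply hmsp.dvd_of_roots_le_roots hm0
  rw [Multiset.le_iff_count]
  intro b
  have hle := Multiset.count_le_of_le b (roots.le_of_dvd hq0 hmq)
  rw [hroots, Multiset.count_add, Multiset.count_singleton] at hle hcount
  rcases eq_or_ne b r with rfl | hbr
  · simp only [eq_self_iff_true, if_true] at hcount
    omega
  · simp only [if_neg hbr, add_zero] at hle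
    exact hle

/-- Reading off the minimal polynomial of `A` from its `P`-canonical form:
`minpoly F A = X^{t₀} * ∏_j (X - λ_j)^{t_j}`. -/
theorem minpoly_from_P_canonical_form
    (F : Type*) [Field F] (n : Type*) [Fintype n] [DecidableEq n] [Nonempty n]
    (A : Matrix n n F) (p t₀ : ℕ)
    (lam : Fin p → F) (hlam : ∀ j, lam j ≠ 0) (hinj : Function.Injective lam)
    (t : Fin p → ℕ) (ht1 : ∀ j, 1 ≤ t j)
    (N : ℕ → Matrix n n F) (M : Fin p → ℕ → Matrix n n F)
    (hpow : ∀ k : ℕ,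
      A ^ k = (if k < t₀ then N k else 0) +
        ∑ j : Fin p, lam j ^ k •
          ∑ i ∈ Finset.range (t j), (k.choose i : F) • M j i)
    (hM : ∀ j : Fin p, M j (t j - 1) ≠ 0)
    (hN : 1 ≤ t₀ → N (t₀ - 1) ≠ 0) :
    minpoly F A = X ^ t₀ * ∏ j : Fin p, (X - C (lam j)) ^ (t j) := by
  classical
  set q : F[X] := X ^ t₀ * ∏ j : Fin p, (X - C (lam j)) ^ (t j) with hqdef
  have hprodne : (∏ j : Fin p, (X - C (lam j)) ^ (t j)) ≠ 0 :=
    (monic_prod_of_monic _ _ fun j _ => (monic_X_sub_C _).pow _).ne_zero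
  have hqmonic : q.Monic :=
    (monic_X_pow t₀).mul (monic_prod_of_monic _ _ fun j _ => (monic_X_sub_C _).pow _)
  have hq0' : q ≠ 0 := hqmonic.ne_zero
  have hqsplits : q.Splits :=
    (Splits.X_pow _).mul
      (Splits.prod fun j _ => (Splits.X_sub_C _).pow _)
  have key := aux_key F n A p t₀ lam t N M hpow
  -- q annihilates A
  have hdvd_pow : X ^ t₀ ∣ q := Dvd.intro _ rfl
  have hdvd_lin : ∀ j : Fin p, (X - C (lam j)) ^ (t j) ∣ q :=
    fun j => Dvd.dvd.mul_left (Finset.dvd_prod_of_mem _ (mem_univ j)) _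
  have haq : (aeval A) q = 0 := by
    have h1 : ∑ k ∈ Finset.range t₀, q.coeff k • N k = 0 :=
      Finset.sum_eq_zero fun k hk => by
        rw [X_pow_dvd_iff.mp hdvd_pow k (mem_range.mp hk), zero_smul]
    have h2 : (∑ j : Fin p, ∑ i ∈ Finset.range (t j),
        (lam j ^ i * (Polynomial.taylor (lam j) q).coeff i) • M j i) = 0 :=
      Finset.sum_eq_zero fun j _ => Finset.sum_eq_zero fun i hi => by
        rw [aux_taylor_coeff_zero (lam j) (hdvd_lin j) (mem_range.mp hi), mul_zero, zero_smul]
    rw [key q, h1, h2, add_zero]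
  -- minpoly facts
  have hAint : IsIntegral F A := IsIntegral.of_finite F A
  set m : F[X] := minpoly F A with hmdef
  have hmdvd : m ∣ q := minpoly.dvd F A haq
  have hmmonic : m.Monic := minpoly.monic hAint
  have hm0 : m ≠ 0 := hmmonic.ne_zero
  have hmsplits : m.Splits :=
    hqsplits.of_dvd hq0' hmdvd
  -- counting roots of q
  have hqcount : ∀ r : F, q.roots.count r =
      (if r = 0 then t₀ else 0) + ∑ j : Fin p, (if r = lam j then t j else 0) := by
    intro r
    rw [hqdef, roots_mul (by rw [← hqdef]; exact hq0'), roots_pow, roots_X,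
      roots_prod _ _ hprodne]
    simp only [roots_pow, roots_X_sub_C, Multiset.count_add, Multiset.count_nsmul,
      Multiset.count_singleton, Multiset.count_bind, mul_ite, mul_one, mul_zero]
    rw [Finset.sum_eq_multiset_sum]
  -- the contradiction engine
  have hcontra : ∀ (r : F) (f : F[X]), q = f * (X - C r) →
      m.roots.count r < q.roots.count r → (aeval A) f = 0 := by
    intro r f hf hcount
    obtain ⟨c, hc⟩ := aux_dvd_of_count_lt hm0 hmsplits hq0' hmdvd hcount hf
    rw [hc, map_mul, show (aeval A) m = 0 from minpoly.aeval F A, zero_mul]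
  -- lower bound at each lam j
  have claimj : ∀ j : Fin p, t j ≤ m.roots.count (lam j) := by
    intro j
    by_contra hcon
    push_neg at hcon
    set g : F[X] := X ^ t₀ * ∏ j' ∈ Finset.univ.erase j, (X - C (lam j')) ^ (t j') with hgdef
    set f : F[X] := (X - C (lam j)) ^ (t j - 1) * g with hfdef
    have hpowfact : (X - C (lam j)) ^ (t j)
        = (X - C (lam j)) ^ (t j - 1) * (X - C (lam j)) := by
      conv_lhs => rw [← Nat.sub_add_cancel (ht1 j)]
      rw [pow_succ]
    have hfact : q = f * (X - C (lam j)) := by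
      rw [hqdef, hfdef, hgdef, ← Finset.mul_prod_erase Finset.univ _ (mem_univ j), hpowfact]
      ring
    have hqcj : q.roots.count (lam j) = t j := by
      rw [hqcount]
      rw [if_neg (hlam j), Finset.sum_eq_single j (fun j' _ hj' => if_neg
        (fun h => hj' (hinj h.symm))) (fun h => absurd (mem_univ j) h), if_pos rfl,
        zero_add]
    have h0 := hcontra (lam j) f hfact (by rw [hqcj]; exact hcon)
    rw [key f] at h0
    have hXdvd : X ^ t₀ ∣ f := ⟨(X - C (lam j)) ^ (t j - 1) *
        ∏ j' ∈ Finset.univ.erase j, (X - C (lam j')) ^ (t j'), by rw [hfdef, hgdef]; ring⟩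
    have h1 : ∑ k ∈ Finset.range t₀, f.coeff k • N k = 0 :=
      Finset.sum_eq_zero fun k hk => by
        rw [X_pow_dvd_iff.mp hXdvd k (mem_range.mp hk), zero_smul]
    have hlindvd : ∀ j' : Fin p, j' ≠ j → (X - C (lam j')) ^ (t j') ∣ f := by
      intro j' hj'
      refine Dvd.dvd.mul_left (Dvd.dvd.mul_left ?_ _) _
      exact Finset.dvd_prod_of_mem _ (Finset.mem_erase.mpr ⟨hj', mem_univ j'⟩)
    have h2 : (∑ j' : Fin p, ∑ i ∈ Finset.range (t j'),
        (lam j' ^ i * (Polynomial.taylor (lam j') f).coeff i) • M j' i)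
        = (lam j ^ (t j - 1) * g.eval (lam j)) • M j (t j - 1) := by
      rw [Finset.sum_eq_single j (fun j' _ hj' => Finset.sum_eq_zero fun i hi => by
        rw [aux_taylor_coeff_zero (lam j') (hlindvd j' hj') (mem_range.mp hi),
          mul_zero, zero_smul]) (fun h => absurd (mem_univ j) h)]
      rw [Finset.sum_eq_single_of_mem (t j - 1)
        (mem_range.mpr (by omega))
        (fun i hi hne => by
          rw [aux_taylor_coeff_zero (lam j) (Dvd.intro g rfl)
            (by have := mem_range.mp hi; omega), mul_zero, zero_smul])]
      rw [hfdef, aux_taylor_coeff_top]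
    rw [h1, h2, zero_add] at h0
    have hgne : g.eval (lam j) ≠ 0 := by
      rw [hgdef]
      simp only [eval_mul, eval_pow, eval_prod, eval_sub, eval_X, eval_C]
      refine mul_ne_zero (pow_ne_zero _ (hlam j)) (Finset.prod_ne_zero_iff.mpr ?_)
      intro j' hj'
      exact pow_ne_zero _ (sub_ne_zero.mpr (fun h => (Finset.mem_erase.mp hj').1 (hinj h.symm)))
    have hscal : lam j ^ (t j - 1) * g.eval (lam j) ≠ 0 :=
      mul_ne_zero (pow_ne_zero _ (hlam j)) hgne
    exact hM j ((smul_eq_zero.mp h0).resolve_left hscal)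
  -- lower bound at 0
  have claim0 : t₀ ≤ m.roots.count 0 := by
    rcases Nat.eq_zero_or_pos t₀ with ht0 | ht0
    · omega
    by_contra hcon
    push_neg at hcon
    set g : F[X] := ∏ j : Fin p, (X - C (lam j)) ^ (t j) with hgdef
    set f : F[X] := X ^ (t₀ - 1) * g with hfdef
    have hfact : q = f * (X - C 0) := by
      rw [C_0, sub_zero, hqdef, hfdef]
      conv_lhs => rw [show t₀ = (t₀ - 1) + 1 by omega]
      rw [pow_succ]
      ring
    have hqc0 : q.roots.count 0 = t₀ := by
      rw [hqcount, if_pos rfl, Finset.sum_eq_zero fun j _ => if_neg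
        (fun h => hlam j h.symm), add_zero]
    have h0 := hcontra 0 f hfact (by rw [hqc0]; exact hcon)
    rw [key f] at h0
    have h2 : (∑ j : Fin p, ∑ i ∈ Finset.range (t j),
        (lam j ^ i * (Polynomial.taylor (lam j) f).coeff i) • M j i) = 0 :=
      Finset.sum_eq_zero fun j _ => Finset.sum_eq_zero fun i hi => by
        rw [aux_taylor_coeff_zero (lam j)
          (show (X - C (lam j)) ^ (t j) ∣ f from Dvd.dvd.mul_left
            (Finset.dvd_prod_of_mem (fun j => (X - C (lam j)) ^ (t j)) (mem_univ j)) _)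
          (mem_range.mp hi), mul_zero, zero_smul]
    have hXdvd : X ^ (t₀ - 1) ∣ f := Dvd.intro _ rfl
    have h1 : ∑ k ∈ Finset.range t₀, f.coeff k • N k = f.coeff (t₀ - 1) • N (t₀ - 1) :=
      Finset.sum_eq_single_of_mem (t₀ - 1) (mem_range.mpr (by omega))
        (fun k hk hne => by
          rw [X_pow_dvd_iff.mp hXdvd k (by have := mem_range.mp hk; omega), zero_smul])
    have hcoeff : f.coeff (t₀ - 1) = g.eval 0 := by
      rw [hfdef, ← coeff_zero_eq_eval_zero]
      simpa using coeff_X_pow_mul g (t₀ - 1) 0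
    have hgne : g.eval 0 ≠ 0 := by
      rw [hgdef]
      simp only [eval_prod, eval_pow, eval_sub, eval_X, eval_C, zero_sub]
      exact Finset.prod_ne_zero_iff.mpr fun j _ => pow_ne_zero _ (neg_ne_zero.mpr (hlam j))
    rw [h1, h2, add_zero, hcoeff] at h0
    exact hN ht0 ((smul_eq_zero.mp h0).resolve_left hgne)
  -- conclude
  have hqm : q ∣ m := by
    apply hqsplits.dvd_of_roots_le_roots hq0'
    rw [Multiset.le_iff_count]
    intro r
    rw [Polynomial.count_roots, ← Polynomial.count_roots, hqcount r]
    by_cases hr0 : r = 0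
    · subst hr0
      rw [if_pos rfl, Finset.sum_eq_zero fun j _ => if_neg (fun h => hlam j h.symm), add_zero]
      exact claim0
    rw [if_neg hr0, zero_add]
    by_cases hrl : ∃ j, r = lam j
    · obtain ⟨j, rfl⟩ := hrl
      rw [Finset.sum_eq_single j (fun j' _ hj' => if_neg (fun h => hj' (hinj h.symm)))
        (fun h => absurd (mem_univ j) h), if_pos rfl]
      exact claimj j
    · push_neg at hrl
      rw [Finset.sum_eq_zero fun j _ => if_neg (hrl j)]
      exact Nat.zero_le _
  exact eq_of_monic_of_associated hmmonic hqmonic (associated_of_dvd_dvd hmdvd hqm)
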